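/- arXiv:2111.08824 — 2 statements merged into one kernel-verified Lean document; each statement's English description precedes it below -/
import Mathlib

section
/- Let m and s₀ be real numbers, and let T : ℕ → ℝ satisfy T(0) = s₀ and, for every k ≥ 1, T(k) = m^k + 2·m·T(k−1). Then for every natural number k, T(k) = m^k·(2^k − 1) + (2·m)^k·s₀. -/
/-- Closed-form solution of the request-buffer recurrence `T(k) = m^k + 2·m·T(k−1)`
with base value `T(0) = s₀` (Proposition 1, reparametrized at `n = m^k`). -/
theorem rmi_buffer_recurrence_closed_form (m s₀ : ℝ) (T : ℕ → ℝ)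
    (hT0 : T 0 = s₀)
    (hTrec : ∀ k : ℕ, 1 ≤ k → T k = m ^ k + 2 * m * T (k - 1)) :
    ∀ k : ℕ, T k = m ^ k * (2 ^ k - 1) + (2 * m) ^ k * s₀ := by
  intro k
  induction k with
  | zero => simpa using hT0
  | succ n ih =>
    rw [hTrec (n+1) (Nat.le_add_left 1 n), Nat.add_sub_cancel, ih]
    ring
end

section
/- Let μ be a probability measure on ℝ whose cumulative distribution function cdf(μ) is continuous. Then the pushforward measure of μ under the map x ↦ cdf(μ)(x) is the uniform distribution on the unit interval, i.e., it equals Lebesgue measure restricted to [0, 1]. -/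
open MeasureTheory ProbabilityTheory

/-- Key lemma: for `0 ≤ t < 1`, the measure of `{x | cdf μ x ≤ t}` is `t`. -/
lemma measure_cdf_le_of_continuous (μ : Measure ℝ) [IsProbabilityMeasure μ]
    (hcont : Continuous fun x => cdf μ x) {t : ℝ} (ht0 : 0 ≤ t) (ht1 : t < 1) :
    μ {x | cdf μ x ≤ t} = ENNReal.ofReal t := by
  set F : ℝ → ℝ := fun x => cdf μ x with hF
  set S : Set ℝ := {x | F x ≤ t} with hS
  by_cases hne : S.Nonempty
  · -- S is a nonempty closed lower set bounded above, hence S = Iic a with F a = t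
    have hclosed : IsClosed S := isClosed_le hcont continuous_const
    have hbdd : BddAbove S := by
      have hev : ∀ᶠ x in Filter.atTop, t < F x :=
        (tendsto_cdf_atTop μ).eventually (eventually_gt_nhds ht1)
      obtain ⟨b, hb⟩ := hev.exists_forall_of_atTop
      exact ⟨b, fun x hx => by
        by_contra h
        exact absurd hx (not_le.mpr (hb x (le_of_not_ge h)))⟩
    set a := sSup S with ha
    have haS : a ∈ S := hclosed.csSup_mem hne hbdd
    have hSIic : S = Set.Iic a := by
      ext x
      constructor
      · exact fun hx => le_csSup hbdd hx
      · intro hx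
        exact le_trans (monotone_cdf μ hx) haS
    have hFa_le : F a ≤ t := haS
    have hFa_ge : t ≤ F a := by
      by_contra h
      push_neg at h
      have hU : {x | F x < t} ∈ nhds a :=
        (isOpen_lt hcont continuous_const).mem_nhds h
      have hU' : ∀ᶠ x in nhdsWithin a (Set.Ioi a), F x < t :=
        Filter.Eventually.filter_mono nhdsWithin_le_nhds hU
      obtain ⟨b, hbU, hba⟩ := (hU'.and self_mem_nhdsWithin).exists
      exact absurd (le_csSup hbdd (le_of_lt hbU)) (not_le.mpr hba)
    have hFa : F a = t := le_antisymm hFa_le hFa_ge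
    calc μ S = μ (Set.Iic a) := by rw [hSIic]
      _ = ENNReal.ofReal (F a) := (ofReal_cdf μ a).symm
      _ = ENNReal.ofReal t := by rw [hFa]
  · -- S empty: then t = 0
    have hSempty : S = ∅ := Set.not_nonempty_iff_eq_empty.mp hne
    have ht : t ≤ 0 := by
      by_contra h
      push_neg at h
      have hev : ∀ᶠ x in Filter.atBot, F x < t :=
        (tendsto_cdf_atBot μ).eventually (eventually_lt_nhds h)
      obtain ⟨x, hx⟩ := hev.exists
      have hxS : x ∈ S := le_of_lt hx
      rw [hSempty] at hxS
      exact hxS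
    have ht' : t = 0 := le_antisymm ht ht0
    rw [hSempty, ht']
    simp

/-- If the CDF of a probability measure `μ` on ℝ is continuous, then pushing `μ`
forward along its CDF yields the uniform distribution on the unit interval. -/
theorem cdf_pushforward_uniform (μ : Measure ℝ) [IsProbabilityMeasure μ]
    (hcont : Continuous fun x => cdf μ x) :
    μ.map (fun x => cdf μ x) = volume.restrict (Set.Icc (0 : ℝ) 1) := by
  have hmeas : Measurable fun x => cdf μ x := hcont.measurable
  refine MeasureTheory.Measure.ext_of_Iic _ _ (fun t => ?_)
  rw [Measure.map_apply hmeas measurableSet_Iic,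
      Measure.restrict_apply measurableSet_Iic]
  rcases lt_or_ge t 0 with ht | ht0
  · have h1 : (fun x => cdf μ x) ⁻¹' Set.Iic t = ∅ := by
      ext x
      simp only [Set.mem_preimage, Set.mem_Iic, Set.mem_empty_iff_false, iff_false, not_le]
      exact lt_of_lt_of_le ht (cdf_nonneg μ x)
    have h2 : Set.Iic t ∩ Set.Icc (0:ℝ) 1 = ∅ := by
      ext x
      simp only [Set.mem_inter_iff, Set.mem_Iic, Set.mem_Icc, Set.mem_empty_iff_false, iff_false]
      rintro ⟨hx, hx0, _⟩
      exact absurd (le_trans hx0 hx) (not_le.mpr ht)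
    rw [h1, h2]
    simp
  rcases lt_or_ge t 1 with ht1 | ht1
  · have h1 : (fun x => cdf μ x) ⁻¹' Set.Iic t = {x | cdf μ x ≤ t} := rfl
    have h2 : Set.Iic t ∩ Set.Icc (0:ℝ) 1 = Set.Icc 0 t := by
      ext x
      simp only [Set.mem_inter_iff, Set.mem_Iic, Set.mem_Icc]
      constructor
      · rintro ⟨hx, hx0, _⟩; exact ⟨hx0, hx⟩
      · rintro ⟨hx0, hx⟩; exact ⟨hx, hx0, le_trans hx ht1.le⟩
    rw [h1, h2, measure_cdf_le_of_continuous μ hcont ht0 ht1, Real.volume_Icc, sub_zero]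
  · have h1 : (fun x => cdf μ x) ⁻¹' Set.Iic t = Set.univ := by
      ext x
      simp only [Set.mem_preimage, Set.mem_Iic, Set.mem_univ, iff_true]
      exact le_trans (cdf_le_one μ x) ht1
    have h2 : Set.Iic t ∩ Set.Icc (0:ℝ) 1 = Set.Icc 0 1 := by
      ext x
      simp only [Set.mem_inter_iff, Set.mem_Iic, Set.mem_Icc]
      exact ⟨fun h => h.2, fun h => ⟨le_trans h.2 ht1, h⟩⟩
    rw [h1, h2, measure_univ, Real.volume_Icc]
    norm_num
end
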